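/- Let M be a {0,1}-matrix with k diagonal zeros and ℓ diagonal ones, and D a minimal M-obstruction. If S is a homogeneous strong clique of D, then |S| ≤ k + 1. -/

import Mathlib

variable {V : Type*}

/-- `w` distinguishes distinct vertices `u` and `v`: exactly one of `u,v` is an
in-neighbour of `w`, or exactly one of `u,v` is an out-neighbour of `w`. -/
def Distinguishes (A : V → V → Prop) (w u v : V) : Prop :=
  w ≠ u ∧ w ≠ v ∧
    ((A u w ∧ ¬ A v w) ∨ (A v w ∧ ¬ A u w) ∨ (A w u ∧ ¬ A w v) ∨ (A w v ∧ ¬ A w u))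

/-- `u,v` are false twins in the induced subdigraph on `U`. -/
def FalseTwinsOn (A : V → V → Prop) (U : Set V) (u v : V) : Prop :=
  u ∈ U ∧ v ∈ U ∧ u ≠ v ∧ ¬ A u v ∧ ¬ A v u ∧ ∀ w ∈ U, ¬ Distinguishes A w u v

/-- `u,v` are true twins in the induced subdigraph on `U`. -/
def TrueTwinsOn (A : V → V → Prop) (U : Set V) (u v : V) : Prop :=
  u ∈ U ∧ v ∈ U ∧ u ≠ v ∧ A u v ∧ A v u ∧ ∀ w ∈ U, ¬ Distinguishes A w u v

/-- The induced subdigraph on `U` is point-determining: no pair of false twins. -/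
def PointDeterminingOn (A : V → V → Prop) (U : Set V) : Prop :=
  ∀ u v, ¬ FalseTwinsOn A U u v

/-- A triple `(x, {y,z})`: `x,y,z` are pairwise distinct and `y,z` are false
twins in `D - x`. `x` is the red vertex, `y,z` are the green vertices. -/
def IsTriple (A : V → V → Prop) (x y z : V) : Prop :=
  x ≠ y ∧ x ≠ z ∧ y ≠ z ∧ FalseTwinsOn A {x}ᶜ y z

/-- `S` is a homogeneous set: any two of its vertices are twins. -/
def Homogeneous (A : V → V → Prop) (S : Set V) : Prop :=
  ∀ u ∈ S, ∀ v ∈ S, u ≠ v → ∀ w, ¬ Distinguishes A w u v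

/-- `S` is a strong clique: arcs in both directions between any two distinct members. -/
def StrongClique (A : V → V → Prop) (S : Set V) : Prop :=
  ∀ u ∈ S, ∀ v ∈ S, u ≠ v → A u v ∧ A v u

/-- `S` is an independent set: no arcs between any two distinct members. -/
def IndepSet (A : V → V → Prop) (S : Set V) : Prop :=
  ∀ u ∈ S, ∀ v ∈ S, u ≠ v → ¬ A u v

/-- `P` is an `M`-partition of the induced subdigraph on `U`: the parts `P i`
partition `U`, a part with `M i i = 0` is independent, a part with `M i i = 1`
is a strong clique, and for `i ≠ j` all arcs from `P i` to `P j` are present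
iff `M i j = 1`. -/
def IsMPartitionOn (A : V → V → Prop) {n : ℕ} (M : Fin n → Fin n → Bool)
    (U : Set V) (P : Fin n → Set V) : Prop :=
  (∀ i, P i ⊆ U) ∧ (∀ v ∈ U, ∃! i, v ∈ P i) ∧
    ∀ i j, ∀ u ∈ P i, ∀ v ∈ P j, u ≠ v → (A u v ↔ M i j = true)

def HasMPartitionOn (A : V → V → Prop) {n : ℕ} (M : Fin n → Fin n → Bool)
    (U : Set V) : Prop :=
  ∃ P, IsMPartitionOn A M U P

/-- `D` is a minimal `M`-obstruction: it admits no `M`-partition, but every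
one-vertex-deleted induced subdigraph does. -/
def MinimalObstruction (A : V → V → Prop) {n : ℕ} (M : Fin n → Fin n → Bool) : Prop :=
  ¬ HasMPartitionOn A M Set.univ ∧ ∀ v : V, HasMPartitionOn A M {v}ᶜ

lemma not_dist_iff {A : V → V → Prop} {w u v : V} (h : ¬ Distinguishes A w u v)
    (hwu : w ≠ u) (hwv : w ≠ v) : (A u w ↔ A v w) ∧ (A w u ↔ A w v) := by
  have h' : ¬ ((A u w ∧ ¬ A v w) ∨ (A v w ∧ ¬ A u w) ∨ (A w u ∧ ¬ A w v) ∨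
      (A w v ∧ ¬ A w u)) := fun d => h ⟨hwu, hwv, d⟩
  constructor <;> constructor <;> intro hx <;> by_contra hy <;> exact h' (by tauto)

theorem stmt10 [Fintype V] {k l : ℕ} (A : V → V → Prop) (hirr : ∀ v, ¬ A v v)
    (M : Fin (k + l) → Fin (k + l) → Bool)
    (hdiag : ∀ i : Fin (k + l), M i i = true ↔ k ≤ (i : ℕ))
    (hobs : MinimalObstruction A M)
    (S : Set V) (hhom : Homogeneous A S) (hsc : StrongClique A S) :
    S.ncard ≤ k + 1 := by
  by_contra hcard
  push_neg at hcard
  have h2 : k + 2 ≤ S.ncard := hcard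
  have hSfin : S.Finite := Set.toFinite S
  have hS0 : S.Nonempty := by
    rw [← Set.ncard_pos hSfin]; omega
  obtain ⟨v, hv⟩ := hS0
  obtain ⟨P, hPsub, hPuniq, hPadj⟩ := hobs.2 v
  -- find another element u0 of S
  have hcard' : k + 1 ≤ (S \ {v}).ncard := by
    have := Set.ncard_diff_singleton_of_mem hv
    omega
  have hne : (S \ {v}).Nonempty := by
    rw [← Set.ncard_pos (hSfin.diff)]; omega
  obtain ⟨u0, hu0S, hu0v⟩ := hne
  have hu0v : u0 ≠ v := hu0v
  have hNE : Nonempty (Fin (k + l)) := ⟨(hPuniq u0 hu0v).exists.choose⟩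
  classical
  -- the index function
  set f : V → Fin (k + l) := fun w =>
    if h : w ≠ v then (hPuniq w h).exists.choose else Classical.arbitrary _ with hf
  have hfmem : ∀ w, w ≠ v → w ∈ P (f w) := by
    intro w hw
    simp only [hf, dif_pos hw]
    exact (hPuniq w hw).exists.choose_spec
  by_cases hcase : ∃ u ∈ S, u ≠ v ∧ M (f u) (f u) = true
  · -- extend the partition by inserting v into part of u
    obtain ⟨u, huS, huv, hMuu⟩ := hcase
    set i := f u with hi
    have huPi : u ∈ P i := hfmem u huv
    refine hobs.1 ⟨fun j => if j = i then insert v (P j) else P j, ?_, ?_, ?_⟩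
    · intro j; exact fun x _ => trivial
    · intro w _
      by_cases hw : w = v
      · subst hw
        refine ⟨i, by simp, ?_⟩
        intro j hj
        by_contra hji
        simp only [if_neg hji] at hj
        exact (hPsub j hj) rfl
      · obtain ⟨j, hj, hjuniq⟩ := hPuniq w hw
        refine ⟨j, ?_, ?_⟩
        · by_cases hji : j = i
          · subst hji; simp [hj]
          · simp [hji, hj]
        · intro a ha
          have ha : w ∈ (if a = i then insert v (P a) else P a) := ha
          by_cases hai : a = i
          · rw [if_pos hai, Set.mem_insert_iff] at ha
            rcases ha with h1 | h1
            · exact absurd h1 hw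
            · exact hjuniq a h1
          · rw [if_neg hai] at ha
            exact hjuniq a ha
    · intro a b x hx y hy hxy
      have hvin : ∀ c : Fin (k+l), v ∈ (if c = i then insert v (P c) else P c) → c = i := by
        intro c hc
        by_contra hci
        simp only [if_neg hci] at hc
        exact (hPsub c hc) rfl
      have hmem : ∀ c : Fin (k+l), ∀ w : V, w ≠ v →
          w ∈ (if c = i then insert v (P c) else P c) → w ∈ P c := by
        intro c w hw hc
        by_cases hci : c = i
        · rw [if_pos hci, Set.mem_insert_iff] at hc
          rcases hc with h1 | h1
          · exact absurd h1 hw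
          · exact h1
        · rwa [if_neg hci] at hc
      have htw : ∀ w : V, w ≠ u → w ≠ v → (A u w ↔ A v w) ∧ (A w u ↔ A w v) := by
        intro w hwu hwv
        exact not_dist_iff (hhom u huS v hv huv w) hwu hwv
      by_cases hxv : x = v
      · have hai : a = i := hvin a (hxv ▸ hx)
        have hyv : y ≠ v := fun h => hxy (hxv.trans h.symm)
        have hyPb : y ∈ P b := hmem b y hyv hy
        by_cases hyu : y = u
        · have hbi : b = i := (hPuniq y hyv).unique hyPb (by rw [hyu]; exact huPi)
          have hAxy : A x y := by
            rw [hxv, hyu]; exact (hsc v hv u huS (Ne.symm huv)).1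
          rw [hai, hbi, hMuu]
          simpa using hAxy
        · have h1 := hPadj i b u huPi y hyPb (fun h => hyu h.symm)
          rw [hai, hxv]
          exact (htw y hyu hyv).1.symm.trans h1
      · have hxPa : x ∈ P a := hmem a x hxv hx
        by_cases hyv : y = v
        · have hbi : b = i := hvin b (hyv ▸ hy)
          by_cases hxu : x = u
          · have hai : a = i := (hPuniq x hxv).unique hxPa (by rw [hxu]; exact huPi)
            have hAxy : A x y := by
              rw [hxu, hyv]; exact (hsc u huS v hv huv).1
            rw [hai, hbi, hMuu]
            simpa using hAxy
          · have h1 := hPadj a i x hxPa u huPi hxu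
            rw [hbi, hyv]
            exact (htw x hxu hxv).2.symm.trans h1
        · have hyPb : y ∈ P b := hmem b y hyv hy
          exact hPadj a b x hxPa y hyPb hxy
  · -- pigeonhole: all of S \ {v} goes to the < k parts
    push_neg at hcase
    have hmapsto : ∀ w ∈ (S \ {v}).toFinset,
        f w ∈ Finset.univ.filter (fun i : Fin (k + l) => (i : ℕ) < k) := by
      intro w hw
      rw [Set.mem_toFinset, Set.mem_diff, Set.mem_singleton_iff] at hw
      have hM := hcase w hw.1 hw.2
      have := (hdiag (f w)).not.mp (by simp [hM])
      simp only [Finset.mem_filter, Finset.mem_univ, true_and]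
      omega
    have hcardT : (Finset.univ.filter (fun i : Fin (k + l) => (i : ℕ) < k)).card ≤ k := by
      have : (Finset.univ.filter (fun i : Fin (k + l) => (i : ℕ) < k)).card ≤
          (Finset.range k).card := by
        apply Finset.card_le_card_of_injOn (fun i : Fin (k + l) => (i : ℕ))
        · intro x hx
          simp only [Finset.mem_coe, Finset.mem_filter] at hx
          simpa using hx.2
        · intro x _ y _ h
          exact Fin.ext h
      simpa using this
    have hlt : (Finset.univ.filter (fun i : Fin (k + l) => (i : ℕ) < k)).card <
        (S \ {v}).toFinset.card := by
      rw [Set.ncard_eq_toFinset_card'] at hcard'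
      omega
    obtain ⟨x, hx, y, hy, hxy, hfxy⟩ :=
      Finset.exists_ne_map_eq_of_card_lt_of_maps_to hlt hmapsto
    rw [Set.mem_toFinset, Set.mem_diff, Set.mem_singleton_iff] at hx hy
    have hxP := hfmem x hx.2
    have hyP := hfmem y hy.2
    rw [hfxy] at hxP
    have hA := (hPadj (f y) (f y) x hxP y hyP hxy).mp (hsc x hx.1 y hy.1 hxy).1
    have hM := hcase y hy.1 hy.2
    rw [hA] at hM
    exact hM rfl
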